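/- arXiv:math-ph/0307050 — 2 statements merged into one kernel-verified Lean document; each statement's English description precedes it below -/
import Mathlib

section
/- For all G₁, G₂ ∈ B_bs(Γ₀), one has G₁ ⋆ G₂ ∈ B_bs(Γ₀) and K(G₁ ⋆ G₂) = (KG₁) · (KG₂) as functions on Γ. -/
open MeasureTheory
open scoped BigOperators ENNReal Classical

noncomputable section

/-- The one-particle space `ℝ^d`. -/
abbrev Rd (d : ℕ) : Type := Fin d → ℝ

/-- The configuration space `Γ`: all locally finite subsets of `ℝ^d`. -/
def Config (d : ℕ) : Type :=
  {γ : Set (Rd d) // ∀ K : Set (Rd d), IsCompact K → (γ ∩ K).Finite}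

variable {d : ℕ}

namespace Config

/-- `γ ∪ {x}`. -/
def insertPt (γ : Config d) (x : Rd d) : Config d :=
  ⟨insert x γ.1, fun K hK => ((γ.2 K hK).insert x).subset (by
      rintro y ⟨hy, hyK⟩
      rcases Set.mem_insert_iff.mp hy with h | h
      · exact Set.mem_insert_iff.mpr (Or.inl h)
      · exact Set.mem_insert_iff.mpr (Or.inr ⟨h, hyK⟩))⟩

/-- `γ ∖ {x}`. -/
def erasePt (γ : Config d) (x : Rd d) : Config d :=
  ⟨γ.1 \ {x}, fun K hK => (γ.2 K hK).subset (fun _ hy => ⟨hy.1.1, hy.2⟩)⟩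

/-- A finite configuration, viewed as an element of `Γ`. -/
def ofFinset (η : Finset (Rd d)) : Config d :=
  ⟨(η : Set (Rd d)), fun _ _ => η.finite_toSet.subset Set.inter_subset_left⟩

/-- The local restriction `γ_Λ := γ ∩ Λ`. -/
def restrict (γ : Config d) (Λ : Set (Rd d)) : Config d :=
  ⟨γ.1 ∩ Λ, fun K hK => (γ.2 K hK).subset (fun _ hy => ⟨hy.1.1, hy.2⟩)⟩

end Config

/-- The σ-algebra on the space `Γ₀` of finite configurations, generated by the
counting maps `η ↦ |η ∩ A|`, `A` measurable. -/
instance : MeasurableSpace (Finset (Rd d)) :=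
  MeasurableSpace.generateFrom
    {S | ∃ (A : Set (Rd d)) (n : ℕ), MeasurableSet A ∧
      S = {η : Finset (Rd d) | ((η : Set (Rd d)) ∩ A).ncard = n}}

/-- The Borel σ-algebra on `Γ`, generated by the counting maps `γ ↦ |γ ∩ A|`. -/
instance : MeasurableSpace (Config d) :=
  MeasurableSpace.generateFrom
    {S | ∃ (A : Set (Rd d)) (n : ℕ), MeasurableSet A ∧
      S = {γ : Config d | (γ.1 ∩ A).ncard = n}}

/-- The Lebesgue–Poisson measure `λ_z = Σ_n (zⁿ/n!) m⁽ⁿ⁾` on `Γ₀`, where `m⁽ⁿ⁾` is the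
image of Lebesgue measure on `(ℝ^d)ⁿ` under `(x₁,…,xₙ) ↦ {x₁,…,xₙ}`. -/
def lambdaLP (d : ℕ) (z : ℝ) : Measure (Finset (Rd d)) :=
  Measure.sum fun n : ℕ =>
    (ENNReal.ofReal (z ^ n / n.factorial)) •
      Measure.map (fun x : Fin n → Rd d => Finset.image x Finset.univ) volume

/-- The `⋆`-convolution `(G₁ ⋆ G₂)(η) = Σ_{(η₁,η₂,η₃)∈P₃(η)} G₁(η₁∪η₂) G₂(η₂∪η₃)`,
the sum running over all ordered partitions of `η` into three (possibly empty) parts. -/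
def starConv {M : Type*} [NonUnitalNonAssocSemiring M]
    (G₁ G₂ : Finset (Rd d) → M) (η : Finset (Rd d)) : M :=
  ∑ η₁ ∈ η.powerset, ∑ η₂ ∈ (η \ η₁).powerset,
    G₁ (η₁ ∪ η₂) * G₂ (η₂ ∪ ((η \ η₁) \ η₂))

/-- The `K`-transform `(KG)(γ) = Σ_{η ⋐ γ} G(η)`. -/
def Ktrans {M : Type*} [AddCommMonoid M] [TopologicalSpace M]
    (G : Finset (Rd d) → M) (γ : Config d) : M :=
  ∑' η : {η : Finset (Rd d) // (η : Set (Rd d)) ⊆ γ.1}, G η.1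

/-- `B_bs(Γ₀)`: bounded measurable functions on `Γ₀` with bounded support. -/
def BddSupp (G : Finset (Rd d) → ℝ) : Prop :=
  Measurable G ∧ ∃ (L : ℝ) (N : ℕ) (Λ : Set (Rd d)), IsCompact Λ ∧
    (∀ η, |G η| ≤ L) ∧
    (∀ η : Finset (Rd d), ¬((η : Set (Rd d)) ⊆ Λ ∧ η.card ≤ N) → G η = 0)

/-- A pair potential `φ : ℝ^d → ℝ ∪ {+∞}`, symmetric and real-valued away from `0`. -/
structure PairPotential (d : ℕ) where
  toFun : Rd d → EReal
  measurable' : Measurable toFun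
  symm' : ∀ x, toFun (-x) = toFun x
  finite_off_zero' : ∀ x, x ≠ 0 → toFun x ≠ ⊤
  ne_bot' : ∀ x, toFun x ≠ ⊥

/-- `e^{-a}` for `a ∈ ℝ ∪ {+∞}`, with `e^{-∞} := 0`. -/
def expNegE (a : EReal) : ℝ :=
  if a = ⊤ then 0 else Real.exp (-a.toReal)

/-- The energy `E(η) = Σ_{{x,y}⊂η} φ(x-y)` of a finite configuration. -/
def pairEnergy (V : PairPotential d) (η : Finset (Rd d)) : ℝ :=
  (1 / 2) * ∑ x ∈ η, ∑ y ∈ η.erase x, (V.toFun (x - y)).toReal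

/-- Stability (S): `E(η) ≥ -B|η|` for all finite configurations `η`. -/
def Stable (V : PairPotential d) (B : ℝ) : Prop :=
  0 ≤ B ∧ ∀ η : Finset (Rd d), -B * η.card ≤ pairEnergy V η

/-- Integrability (I): `∫ |1 - e^{-φ(x)}| dx < ∞`. -/
def CondI (V : PairPotential d) : Prop :=
  ∫⁻ x : Rd d, ENNReal.ofReal |1 - expNegE (V.toFun x)| < ⊤

/-- Lower regularity (LR): the interaction energy between two disjoint finite
configurations is bounded below by `-Σ a(x-y)` for some nonnegative integrable `a`. -/
def LowerRegular (V : PairPotential d) : Prop :=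
  ∃ a : Rd d → ℝ, Measurable a ∧ (∀ x, 0 ≤ a x) ∧
    (∫⁻ x : Rd d, ENNReal.ofReal (a x) < ⊤) ∧
    ∀ η₁ η₂ : Finset (Rd d), Disjoint η₁ η₂ →
      -(∑ x ∈ η₁, ∑ y ∈ η₂, a (x - y)) ≤ ∑ x ∈ η₁, ∑ y ∈ η₂, (V.toFun (x - y)).toReal

/-- The relative energy `E(x,η) = Σ_{y∈η} φ(x-y)` of a point w.r.t. a finite
configuration, with values in `ℝ ∪ {±∞}`. -/
def relEnergyF (V : PairPotential d) (x : Rd d) (η : Finset (Rd d)) : EReal :=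
  ∑ y ∈ η, V.toFun (x - y)

/-- `e^{-E(x,γ)}` for a general (possibly infinite) configuration `γ`: if the series
`Σ_{y∈γ} φ(x-y)` is (absolutely) convergent this is the exponential of minus its sum,
and otherwise `E(x,γ) := +∞`, i.e. `e^{-E(x,γ)} := 0`. -/
def expNegRelEnergy (V : PairPotential d) (x : Rd d) (γ : Set (Rd d)) : ℝ :=
  if (∀ y ∈ γ, V.toFun (x - y) ≠ ⊤) ∧
      Summable (fun y : γ => |(V.toFun (x - (y : Rd d))).toReal|)
  then Real.exp (-∑' y : γ, (V.toFun (x - (y : Rd d))).toReal)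
  else 0

/-- The Glauber generator:
`(HF)(γ) = -Σ_{x∈γ}(F(γ∖{x})-F(γ)) - z ∫ e^{-E(x,γ)} (F(γ∪{x})-F(γ)) dx`. -/
def glauber (V : PairPotential d) (z : ℝ) (F : Config d → ℝ) (γ : Config d) : ℝ :=
  -((∑' x : γ.1, (F (γ.erasePt x) - F γ)) +
    z * ∫ x : Rd d, expNegRelEnergy V x γ.1 * (F (γ.insertPt x) - F γ))

/-- `Ĥ := K⁻¹ H K` on quasi-observables, via `(K⁻¹F)(η) = Σ_{ξ⊂η} (-1)^{|η∖ξ|} F(ξ)`. -/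
def hatH (V : PairPotential d) (z : ℝ) (G : Finset (Rd d) → ℝ)
    (η : Finset (Rd d)) : ℝ :=
  ∑ ξ ∈ η.powerset, (-1 : ℝ) ^ (η.card - ξ.card) *
    glauber V z (Ktrans G) (Config.ofFinset ξ)

/-- `M¹_fm(Γ)`: probability measures on `Γ` with finite local moments of all orders. -/
def HasFiniteLocalMoments (μ : Measure (Config d)) : Prop :=
  IsProbabilityMeasure μ ∧ ∀ (n : ℕ) (Λ : Set (Rd d)), IsCompact Λ →
    ∫⁻ γ : Config d, ((γ.1 ∩ Λ).ncard : ℝ≥0∞) ^ n ∂μ < ⊤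

/-- `ρ = K*μ` is the correlation measure of `μ`:
`∫_{Γ₀} G dρ = ∫_Γ (KG) dμ` for every positive measurable `G` with bounded support. -/
def IsCorrelationMeasure (μ : Measure (Config d)) (ρ : Measure (Finset (Rd d))) : Prop :=
  ∀ G : Finset (Rd d) → ℝ≥0∞, Measurable G →
    (∃ (N : ℕ) (Λ : Set (Rd d)), IsCompact Λ ∧
      ∀ η : Finset (Rd d), ¬((η : Set (Rd d)) ⊆ Λ ∧ η.card ≤ N) → G η = 0) →
    ∫⁻ η, G η ∂ρ =
      ∫⁻ γ, (∑' η : {η : Finset (Rd d) // (η : Set (Rd d)) ⊆ γ.1}, G η.1) ∂μ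

/-- The Georgii–Nguyen–Zessin characterization: `μ` is a Gibbs measure for the pair
potential `φ` and activity `z`. -/
def IsGibbs (V : PairPotential d) (z : ℝ) (μ : Measure (Config d)) : Prop :=
  ∀ H : Rd d → Config d → ℝ≥0∞, Measurable (Function.uncurry H) →
    ∫⁻ γ, ∑' x : γ.1, H x γ ∂μ =
      ENNReal.ofReal z *
        ∫⁻ γ, ∫⁻ x, H x (γ.insertPt x) *
          ENNReal.ofReal (expNegRelEnergy V x γ.1) ∂(volume : Measure (Rd d)) ∂μ

/-- The Kirkwood–Salsburg equation for a correlation function `k`. -/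
def SatisfiesKS (V : PairPotential d) (z : ℝ) (k : Finset (Rd d) → ℝ) : Prop :=
  ∀ᵐ p ∂((lambdaLP d z).prod (volume : Measure (Rd d))),
    k (insert p.2 p.1) =
      expNegE (relEnergyF V p.2 p.1) *
        ∫ ρ, (∏ y ∈ ρ, (expNegE (V.toFun (p.2 - y)) - 1)) * k (p.1 ∪ ρ) ∂(lambdaLP d z)

end
/-- `B_bs(Γ₀)` for complex-valued functions. -/
def BddSuppC {d : ℕ} (G : Finset (Rd d) → ℂ) : Prop :=
  Measurable G ∧ ∃ (L : ℝ) (N : ℕ) (Λ : Set (Rd d)), IsCompact Λ ∧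
    (∀ η, ‖G η‖ ≤ L) ∧
    (∀ η : Finset (Rd d), ¬((η : Set (Rd d)) ⊆ Λ ∧ η.card ≤ N) → G η = 0)

namespace KSAux

variable {d : ℕ}

/-- count of points of `η` in `A`. -/
noncomputable def cnt (A : Set (Rd d)) (η : Finset (Rd d)) : ℕ := (η.filter (· ∈ A)).card

lemma coe_inter_ncard (η : Finset (Rd d)) (A : Set (Rd d)) :
    ((η : Set (Rd d)) ∩ A).ncard = cnt A η := by
  rw [cnt, ← Set.ncard_coe_finset]
  congr 1
  ext x
  simp [Finset.mem_filter, Set.mem_inter_iff]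

lemma measSet_cnt {A : Set (Rd d)} (hA : MeasurableSet A) (n : ℕ) :
    MeasurableSet {η : Finset (Rd d) | cnt A η = n} := by
  have : {η : Finset (Rd d) | cnt A η = n}
      = {η : Finset (Rd d) | ((η : Set (Rd d)) ∩ A).ncard = n} := by
    ext η; rw [Set.mem_setOf_eq, Set.mem_setOf_eq, coe_inter_ncard]
  rw [this]
  exact MeasurableSpace.measurableSet_generateFrom ⟨A, n, hA, rfl⟩

/-- complex indicator of a set of finite configurations -/
noncomputable def indC (S : Set (Finset (Rd d))) : Finset (Rd d) → ℂ := S.indicator (fun _ => 1)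

lemma starConv_congr {u u' v v' : Finset (Rd d) → ℂ} (hu : ∀ ξ, u ξ = u' ξ)
    (hv : ∀ ξ, v ξ = v' ξ) : starConv u v = starConv u' v' := by
  funext η
  unfold starConv
  exact Finset.sum_congr rfl fun _ _ => Finset.sum_congr rfl fun _ _ => by rw [hu, hv]

lemma starConv_congr_on {u u' v v' : Finset (Rd d) → ℂ} {η : Finset (Rd d)}
    (hu : ∀ ξ ⊆ η, u ξ = u' ξ) (hv : ∀ ξ ⊆ η, v ξ = v' ξ) :
    starConv u v η = starConv u' v' η := by
  unfold starConv
  refine Finset.sum_congr rfl fun η₁ h₁ => Finset.sum_congr rfl fun η₂ h₂ => ?_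
  rw [Finset.mem_powerset] at h₁ h₂
  have hs : η \ η₁ ⊆ η := Finset.sdiff_subset
  rw [hu _ (Finset.union_subset h₁ (h₂.trans hs)),
      hv _ (Finset.union_subset (h₂.trans hs) ((Finset.sdiff_subset).trans hs))]

lemma starConv_add_left (u u' v : Finset (Rd d) → ℂ) :
    starConv (fun ξ => u ξ + u' ξ) v = fun η => starConv u v η + starConv u' v η := by
  funext η; unfold starConv
  simp [add_mul, Finset.sum_add_distrib]

lemma starConv_sub_left (u u' v : Finset (Rd d) → ℂ) :
    starConv (fun ξ => u ξ - u' ξ) v = fun η => starConv u v η - starConv u' v η := by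
  funext η; unfold starConv
  simp [sub_mul, Finset.sum_sub_distrib]

lemma starConv_add_right (u v v' : Finset (Rd d) → ℂ) :
    starConv u (fun ξ => v ξ + v' ξ) = fun η => starConv u v η + starConv u v' η := by
  funext η; unfold starConv
  simp [mul_add, Finset.sum_add_distrib]

lemma starConv_sub_right (u v v' : Finset (Rd d) → ℂ) :
    starConv u (fun ξ => v ξ - v' ξ) = fun η => starConv u v η - starConv u v' η := by
  funext η; unfold starConv
  simp [mul_sub, Finset.sum_sub_distrib]

lemma starConv_mul_left (c : ℂ) (u v : Finset (Rd d) → ℂ) :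
    starConv (fun ξ => c * u ξ) v = fun η => c * starConv u v η := by
  funext η; unfold starConv
  simp [Finset.mul_sum, mul_assoc]

lemma starConv_mul_right (c : ℂ) (u v : Finset (Rd d) → ℂ) :
    starConv u (fun ξ => c * v ξ) = fun η => c * starConv u v η := by
  funext η; unfold starConv
  simp only [Finset.mul_sum]
  refine Finset.sum_congr rfl fun η₁ _ => Finset.sum_congr rfl fun η₂ _ => by ring

lemma starConv_zero_left (v : Finset (Rd d) → ℂ) :
    starConv (fun _ => (0 : ℂ)) v = fun _ => 0 := by
  funext η; unfold starConv; simp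

lemma starConv_zero_right (u : Finset (Rd d) → ℂ) :
    starConv u (fun _ => (0 : ℂ)) = fun _ => 0 := by
  funext η; unfold starConv; simp

end KSAux
namespace KSAux

variable {d : ℕ}

lemma exists_cell_bij {κ : Type*} (c : Rd d → κ) :
    ∀ η η' : Finset (Rd d),
      (∀ k, (η.filter fun x => c x = k).card = (η'.filter fun x => c x = k).card) →
      ∃ f : Rd d → Rd d, Set.InjOn f ↑η ∧ η.image f = η' ∧ ∀ x ∈ η, c (f x) = c x := by
  intro η
  induction η using Finset.induction_on with
  | empty =>
    intro η' h
    have hη' : η' = ∅ := by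
      by_contra hne
      obtain ⟨y, hy⟩ := Finset.nonempty_iff_ne_empty.mpr hne
      have h1 := h (c y)
      rw [Finset.filter_empty, Finset.card_empty] at h1
      have h2 : y ∈ η'.filter fun x => c x = c y := Finset.mem_filter.mpr ⟨hy, rfl⟩
      have := Finset.card_pos.mpr ⟨y, h2⟩
      omega
    subst hη'
    exact ⟨id, Set.injOn_id _, by simp, by simp⟩
  | @insert a t ha IH =>
    intro η' h
    have hmem : (η'.filter fun x => c x = c a).Nonempty := by
      apply Finset.card_pos.mp
      rw [← h (c a)]
      exact Finset.card_pos.mpr ⟨a, Finset.mem_filter.mpr ⟨Finset.mem_insert_self a t, rfl⟩⟩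
    obtain ⟨y, hy⟩ := hmem
    rw [Finset.mem_filter] at hy
    obtain ⟨hyη', hcy⟩ := hy
    have hcount : ∀ k, (t.filter fun x => c x = k).card
        = ((η'.erase y).filter fun x => c x = k).card := by
      intro k
      have hk := h k
      rw [Finset.filter_insert] at hk
      rw [Finset.filter_erase]
      by_cases hka : c a = k
      · rw [if_pos hka] at hk
        have hat : a ∉ t.filter fun x => c x = k := fun hmem => ha (Finset.mem_filter.mp hmem).1
        rw [Finset.card_insert_of_notMem hat] at hk
        have hyf : y ∈ η'.filter fun x => c x = k :=
          Finset.mem_filter.mpr ⟨hyη', by rw [hcy, hka]⟩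
        rw [Finset.card_erase_of_mem hyf]
        omega
      · rw [if_neg hka] at hk
        rw [hk]
        have hynf : y ∉ Finset.filter (fun x => c x = k) η' := fun hyf =>
          hka (hcy.symm.trans (Finset.mem_filter.mp hyf).2)
        exact (congrArg Finset.card (Finset.erase_eq_of_notMem hynf)).symm
    obtain ⟨f, hfi, hfim, hfc⟩ := IH (η'.erase y) hcount
    have hyn : ∀ z ∈ t, f z ≠ y := by
      intro z hz hzy
      have hz' : f z ∈ t.image f := Finset.mem_image_of_mem f hz
      rw [hfim, hzy] at hz'
      exact (Finset.notMem_erase y η') hz'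
    have hne : ∀ z, z ∈ t → z ≠ a := by
      intro z hz he
      subst he
      exact ha hz
    have hupd : ∀ z ∈ t, Function.update f a y z = f z := fun z hz =>
      Function.update_of_ne (hne z hz) y f
    refine ⟨Function.update f a y, ?_, ?_, ?_⟩
    · intro x hx x' hx' heq
      rw [Finset.coe_insert, Set.mem_insert_iff] at hx hx'
      rcases hx with rfl | hx
      · rcases hx' with rfl | hx'
        · rfl
        · rw [Function.update_self, hupd x' (Finset.mem_coe.mp hx')] at heq
          exact absurd heq.symm (hyn x' (Finset.mem_coe.mp hx'))
      · rcases hx' with rfl | hx'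
        · rw [Function.update_self, hupd x (Finset.mem_coe.mp hx)] at heq
          exact absurd heq (hyn x (Finset.mem_coe.mp hx))
        · rw [hupd x (Finset.mem_coe.mp hx), hupd x' (Finset.mem_coe.mp hx')] at heq
          exact hfi hx hx' heq
    · rw [Finset.image_insert, Function.update_self]
      have himc : t.image (Function.update f a y) = t.image f :=
        Finset.image_congr fun z hz => hupd z hz
      rw [himc, hfim, Finset.insert_erase hyη']
    · intro x hx
      rcases Finset.mem_insert.mp hx with rfl | hx
      · rw [Function.update_self, hcy]
      · rw [hupd x hx]
        exact hfc x hx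

lemma image_sdiff_of_injOn {f : Rd d → Rd d} {η : Finset (Rd d)} (hinj : Set.InjOn f ↑η)
    {ξ ζ : Finset (Rd d)} (hξ : ξ ⊆ η) (hζ : ζ ⊆ η) :
    (ξ \ ζ).image f = ξ.image f \ ζ.image f := by
  ext y
  simp only [Finset.mem_image, Finset.mem_sdiff]
  constructor
  · rintro ⟨x, ⟨hxξ, hxζ⟩, rfl⟩
    refine ⟨⟨x, hxξ, rfl⟩, ?_⟩
    rintro ⟨z, hzζ, hz⟩
    exact hxζ (hinj (hζ hzζ) (hξ hxξ) hz ▸ hzζ)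
  · rintro ⟨⟨x, hxξ, rfl⟩, hnot⟩
    exact ⟨x, ⟨hxξ, fun hxζ => hnot ⟨x, hxζ, rfl⟩⟩, rfl⟩

lemma cnt_image_of_cell {κ : Type*} {c : Rd d → κ} {f : Rd d → Rd d} {η : Finset (Rd d)}
    (hinj : Set.InjOn f ↑η) (hc : ∀ x ∈ η, c (f x) = c x) {ξ : Finset (Rd d)} (hξ : ξ ⊆ η)
    (k : κ) :
    ((ξ.image f).filter fun x => c x = k).card = (ξ.filter fun x => c x = k).card := by
  have himg : (ξ.image f).filter (fun x => c x = k) = (ξ.filter fun x => c x = k).image f := by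
    ext y
    simp only [Finset.mem_filter, Finset.mem_image]
    constructor
    · rintro ⟨⟨x, hxξ, rfl⟩, hck⟩
      exact ⟨x, ⟨hxξ, by rw [← hc x (hξ hxξ)]; exact hck⟩, rfl⟩
    · rintro ⟨x, ⟨hxξ, hck⟩, rfl⟩
      exact ⟨⟨x, hxξ, rfl⟩, by rw [hc x (hξ hxξ)]; exact hck⟩
  rw [himg]
  exact Finset.card_image_of_injOn
    (hinj.mono (Finset.coe_subset.mpr ((Finset.filter_subset _ _).trans hξ)))

private lemma sig_eq {X : Type} {a a' b b' : Finset X} (h1 : a = a') (h2 : b = b') :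
    (⟨a, b⟩ : Σ _ : Finset X, Finset X) = ⟨a', b'⟩ := by subst h1; subst h2; rfl

lemma starConv_invariant {κ : Type*} (c : Rd d → κ) (u v : Finset (Rd d) → ℂ)
    (hu : ∀ ξ ξ', (∀ k, (ξ.filter fun x => c x = k).card = (ξ'.filter fun x => c x = k).card)
      → u ξ = u ξ')
    (hv : ∀ ξ ξ', (∀ k, (ξ.filter fun x => c x = k).card = (ξ'.filter fun x => c x = k).card)
      → v ξ = v ξ')
    (η η' : Finset (Rd d))
    (h : ∀ k, (η.filter fun x => c x = k).card = (η'.filter fun x => c x = k).card) :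
    starConv u v η = starConv u v η' := by
  obtain ⟨f, hinj, himg, hcell⟩ := exists_cell_bij c η η' h
  set g := Function.invFunOn f ↑η with hg
  have hgf : ∀ x ∈ η, g (f x) = x := fun x hx => hinj.leftInvOn_invFunOn hx
  have hfg : ∀ y ∈ η', f (g y) = y := by
    intro y hy
    have hy' : y ∈ η.image f := himg ▸ hy
    obtain ⟨x, hx, rfl⟩ := Finset.mem_image.mp hy'
    rw [hgf x hx]
  have hgmem : ∀ y ∈ η', g y ∈ η := by
    intro y hy
    have hy' : y ∈ η.image f := himg ▸ hy
    obtain ⟨x, hx, rfl⟩ := Finset.mem_image.mp hy'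
    rw [hgf x hx]; exact hx
  have hginj : Set.InjOn g ↑η' := by
    intro y1 h1 y2 h2 hgy
    rw [← hfg y1 h1, ← hfg y2 h2, hgy]
  have hgimg : η'.image g = η := by
    ext x
    simp only [Finset.mem_image]
    constructor
    · rintro ⟨y, hy, rfl⟩; exact hgmem y hy
    · intro hx
      refine ⟨f x, ?_, hgf x hx⟩
      rw [← himg]; exact Finset.mem_image_of_mem f hx
  have hgcell : ∀ y ∈ η', c (g y) = c y := by
    intro y hy
    conv_rhs => rw [← hfg y hy]
    rw [hcell _ (hgmem y hy)]
  unfold starConv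
  rw [Finset.sum_sigma' η.powerset (fun η₁ => (η \ η₁).powerset)
        (fun η₁ η₂ => u (η₁ ∪ η₂) * v (η₂ ∪ ((η \ η₁) \ η₂))),
      Finset.sum_sigma' η'.powerset (fun η₁ => (η' \ η₁).powerset)
        (fun η₁ η₂ => u (η₁ ∪ η₂) * v (η₂ ∪ ((η' \ η₁) \ η₂)))]
  refine Finset.sum_nbij' (fun q => ⟨q.1.image f, q.2.image f⟩)
    (fun q => ⟨q.1.image g, q.2.image g⟩) ?_ ?_ ?_ ?_ ?_
  · rintro ⟨q1, q2⟩ hq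
    rw [Finset.mem_sigma, Finset.mem_powerset, Finset.mem_powerset] at hq
    obtain ⟨hq1, hq2⟩ := hq
    rw [Finset.mem_sigma, Finset.mem_powerset, Finset.mem_powerset]
    constructor
    · exact himg ▸ Finset.image_subset_image hq1
    · calc q2.image f ⊆ (η \ q1).image f := Finset.image_subset_image hq2
        _ = η.image f \ q1.image f := image_sdiff_of_injOn hinj (le_refl η) hq1
        _ = η' \ q1.image f := by rw [himg]
  · rintro ⟨q1, q2⟩ hq
    rw [Finset.mem_sigma, Finset.mem_powerset, Finset.mem_powerset] at hq
    obtain ⟨hq1, hq2⟩ := hq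
    rw [Finset.mem_sigma, Finset.mem_powerset, Finset.mem_powerset]
    constructor
    · exact hgimg ▸ Finset.image_subset_image hq1
    · calc q2.image g ⊆ (η' \ q1).image g := Finset.image_subset_image hq2
        _ = η'.image g \ q1.image g := image_sdiff_of_injOn hginj (le_refl η') hq1
        _ = η \ q1.image g := by rw [hgimg]
  · rintro ⟨q1, q2⟩ hq
    rw [Finset.mem_sigma, Finset.mem_powerset, Finset.mem_powerset] at hq
    obtain ⟨hq1, hq2⟩ := hq
    have him : ∀ ξ : Finset (Rd d), ξ ⊆ η → (ξ.image f).image g = ξ := by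
      intro ξ hξ
      rw [Finset.image_image]
      calc ξ.image (g ∘ f) = ξ.image id := Finset.image_congr fun z hz => hgf z (hξ hz)
        _ = ξ := Finset.image_id
    exact sig_eq (him q1 hq1) (him q2 (hq2.trans Finset.sdiff_subset))
  · rintro ⟨q1, q2⟩ hq
    rw [Finset.mem_sigma, Finset.mem_powerset, Finset.mem_powerset] at hq
    obtain ⟨hq1, hq2⟩ := hq
    have him : ∀ ξ : Finset (Rd d), ξ ⊆ η' → (ξ.image g).image f = ξ := by
      intro ξ hξ
      rw [Finset.image_image]
      calc ξ.image (f ∘ g) = ξ.image id := Finset.image_congr fun z hz => hfg z (hξ hz)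
        _ = ξ := Finset.image_id
    exact sig_eq (him q1 hq1) (him q2 (hq2.trans Finset.sdiff_subset))
  · rintro ⟨q1, q2⟩ hq
    rw [Finset.mem_sigma, Finset.mem_powerset, Finset.mem_powerset] at hq
    obtain ⟨hq1, hq2⟩ := hq
    have hq2' : q2 ⊆ η := hq2.trans Finset.sdiff_subset
    have e1 : q1.image f ∪ q2.image f = (q1 ∪ q2).image f := (Finset.image_union _ _).symm
    have e2 : (η' \ q1.image f) \ q2.image f = ((η \ q1) \ q2).image f := by
      rw [image_sdiff_of_injOn hinj Finset.sdiff_subset hq2',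
          image_sdiff_of_injOn hinj (le_refl η) hq1, himg]
    have e3 : q2.image f ∪ ((η' \ q1.image f) \ q2.image f)
        = (q2 ∪ ((η \ q1) \ q2)).image f := by
      rw [e2, Finset.image_union]
    rw [e1, e3]
    congr 1
    · exact hu _ _ fun k => (cnt_image_of_cell hinj hcell (Finset.union_subset hq1 hq2') k).symm
    · exact hv _ _ fun k => (cnt_image_of_cell hinj hcell
        (Finset.union_subset hq2' ((Finset.sdiff_subset).trans Finset.sdiff_subset)) k).symm

end KSAux
namespace KSAux

variable {d : ℕ}

lemma card_filter_eq_cnt (p : Rd d → Prop) [inst : DecidablePred p] (η : Finset (Rd d)) :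
    (η.filter p).card = cnt {x | p x} η := by
  unfold cnt
  exact congrArg Finset.card
    (@Finset.filter_congr _ p (fun x => x ∈ {x | p x}) inst
      (fun a => Classical.propDecidable _) η (fun x _ => Iff.rfl))

/-- cell map associated with a finite family of sets -/
noncomputable def ccell {I : Type} (𝒜 : I → Set (Rd d)) : Rd d → (I → Bool) :=
  fun x i => decide (x ∈ 𝒜 i)

lemma starConv_invariant' {κ : Type*} (c : Rd d → κ) (u v : Finset (Rd d) → ℂ)
    (hu : ∀ ξ ξ', (∀ k, cnt {x | c x = k} ξ = cnt {x | c x = k} ξ') → u ξ = u ξ')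
    (hv : ∀ ξ ξ', (∀ k, cnt {x | c x = k} ξ = cnt {x | c x = k} ξ') → v ξ = v ξ')
    (η η' : Finset (Rd d))
    (h : ∀ k, cnt {x | c x = k} η = cnt {x | c x = k} η') :
    starConv u v η = starConv u v η' := by
  refine starConv_invariant c u v ?_ ?_ η η' ?_
  · intro ξ ξ' hk
    exact hu ξ ξ' fun k =>
      (card_filter_eq_cnt _ ξ).symm.trans ((hk k).trans (card_filter_eq_cnt _ ξ'))
  · intro ξ ξ' hk
    exact hv ξ ξ' fun k =>
      (card_filter_eq_cnt _ ξ).symm.trans ((hk k).trans (card_filter_eq_cnt _ ξ'))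
  · intro k
    exact (card_filter_eq_cnt _ η).trans ((h k).trans (card_filter_eq_cnt _ η').symm)

lemma measurable_cellinv {I : Type} [Fintype I] (𝒜 : I → Set (Rd d))
    (h𝒜 : ∀ i, MeasurableSet (𝒜 i)) (F : Finset (Rd d) → ℂ)
    (hF : ∀ η η' : Finset (Rd d),
      (∀ s : I → Bool, cnt {x | ccell 𝒜 x = s} η = cnt {x | ccell 𝒜 x = s} η') → F η = F η') :
    Measurable F := by
  classical
  have hcellmeas : ∀ s : I → Bool, MeasurableSet {x : Rd d | ccell 𝒜 x = s} := by
    intro s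
    have hset : {x : Rd d | ccell 𝒜 x = s} = ⋂ i, {x | decide (x ∈ 𝒜 i) = s i} := by
      ext x
      simp only [Set.mem_setOf_eq, Set.mem_iInter, funext_iff, ccell]
    rw [hset]
    refine MeasurableSet.iInter fun i => ?_
    by_cases hsi : s i = true
    · have : {x : Rd d | decide (x ∈ 𝒜 i) = s i} = 𝒜 i := by ext x; simp [hsi]
      rw [this]; exact h𝒜 i
    · have hsi' : s i = false := by revert hsi; cases s i <;> simp
      have : {x : Rd d | decide (x ∈ 𝒜 i) = s i} = (𝒜 i)ᶜ := by ext x; simp [hsi']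
      rw [this]; exact (h𝒜 i).compl
  have hΦpre : ∀ w : (I → Bool) → ℕ,
      MeasurableSet {η : Finset (Rd d) | ∀ s, cnt {x | ccell 𝒜 x = s} η = w s} := by
    intro w
    have hset : {η : Finset (Rd d) | ∀ s, cnt {x | ccell 𝒜 x = s} η = w s}
        = ⋂ s : I → Bool, {η | cnt {x | ccell 𝒜 x = s} η = w s} := by
      ext η; simp
    rw [hset]
    exact MeasurableSet.iInter fun s => measSet_cnt (hcellmeas s) (w s)
  intro B hB
  have hset : F ⁻¹' B = ⋃ w ∈ {w : (I → Bool) → ℕ | ∃ η, (∀ s, cnt {x | ccell 𝒜 x = s} η = w s)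
      ∧ F η ∈ B}, {η : Finset (Rd d) | ∀ s, cnt {x | ccell 𝒜 x = s} η = w s} := by
    ext η
    simp only [Set.mem_preimage, Set.mem_iUnion, Set.mem_setOf_eq]
    constructor
    · intro hFη
      exact ⟨fun s => cnt {x | ccell 𝒜 x = s} η, ⟨η, fun _ => rfl, hFη⟩, fun _ => rfl⟩
    · rintro ⟨w, ⟨η₀, hw, hF₀⟩, hΦη⟩
      have heq := hF η η₀ (fun s => (hΦη s).trans (hw s).symm)
      rw [heq]; exact hF₀
  rw [hset]
  exact MeasurableSet.biUnion (Set.to_countable _) (fun w _ => hΦpre w)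

lemma cnt_eq_sum_cells {I : Type} [Fintype I] (𝒜 : I → Set (Rd d)) (i : I) (ξ : Finset (Rd d)) :
    cnt (𝒜 i) ξ = ∑ s ∈ Finset.univ.filter (fun s : I → Bool => s i = true),
      cnt {x | ccell 𝒜 x = s} ξ := by
  classical
  have h1 : cnt (𝒜 i) ξ = (ξ.filter (fun x => x ∈ 𝒜 i)).card := rfl
  rw [h1, Finset.card_eq_sum_card_fiberwise
    (f := ccell 𝒜) (t := Finset.univ.filter (fun s : I → Bool => s i = true))
    (fun x hx => Finset.mem_filter.mpr ⟨Finset.mem_univ _, by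
      simp [ccell, (Finset.mem_filter.mp hx).2]⟩)]
  refine Finset.sum_congr rfl fun s hs => ?_
  refine Eq.trans ?_ (card_filter_eq_cnt (fun x => ccell 𝒜 x = s) ξ)
  congr 1
  rw [Finset.filter_filter]
  refine Finset.filter_congr fun x _ => ?_
  have hsi := (Finset.mem_filter.mp hs).2
  constructor
  · rintro ⟨_, hcs⟩; exact hcs
  · intro hcs
    refine ⟨?_, hcs⟩
    have hxi := congrFun hcs i
    simp only [ccell, hsi] at hxi
    exact of_decide_eq_true hxi

/-- basic measurable "cylinder" sets of `Γ₀` given by finitely many count conditions -/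
def SF (F : Finset (Set (Rd d) × ℕ)) : Set (Finset (Rd d)) :=
  {η | ∀ p ∈ F, cnt p.1 η = p.2}

lemma measSet_SF {F : Finset (Set (Rd d) × ℕ)} (hF : ∀ p ∈ F, MeasurableSet p.1) :
    MeasurableSet (SF F) := by
  have hset : SF F = ⋂ p ∈ (F : Set (Set (Rd d) × ℕ)), {η | cnt p.1 η = p.2} := by
    ext η; simp [SF]
  rw [hset]
  exact MeasurableSet.biInter F.finite_toSet.countable
    (fun p hp => measSet_cnt (hF p hp) p.2)

/-- the generating π-system -/
def piC (d : ℕ) : Set (Set (Finset (Rd d))) :=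
  {S | ∃ F : Finset (Set (Rd d) × ℕ), (∀ p ∈ F, MeasurableSet p.1) ∧ S = SF F}

lemma isPi : IsPiSystem (piC d) := by
  rintro S ⟨F₁, h₁, rfl⟩ T ⟨F₂, h₂, rfl⟩ -
  refine ⟨F₁ ∪ F₂, ?_, ?_⟩
  · intro p hp
    rcases Finset.mem_union.mp hp with h | h
    exacts [h₁ p h, h₂ p h]
  · ext η
    simp only [SF, Set.mem_inter_iff, Set.mem_setOf_eq, Finset.mem_union, or_imp, forall_and]

lemma measSpace_eq :
    (inferInstance : MeasurableSpace (Finset (Rd d))) = MeasurableSpace.generateFrom (piC d) := by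
  have h0 : (inferInstance : MeasurableSpace (Finset (Rd d)))
      = MeasurableSpace.generateFrom
        {S | ∃ (A : Set (Rd d)) (n : ℕ), MeasurableSet A ∧
          S = {η : Finset (Rd d) | ((η : Set (Rd d)) ∩ A).ncard = n}} := rfl
  refine le_antisymm ?_ ?_
  · rw [h0]
    refine MeasurableSpace.generateFrom_le ?_
    rintro S ⟨A, n, hA, rfl⟩
    refine MeasurableSpace.measurableSet_generateFrom ⟨{(A, n)}, by simp [hA], ?_⟩
    ext η
    simp [SF, coe_inter_ncard]
  · refine MeasurableSpace.generateFrom_le ?_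
    rintro S ⟨F, hF, rfl⟩
    exact measSet_SF hF

lemma indC_eq_of_cnt {F : Finset (Set (Rd d) × ℕ)} {ξ ξ' : Finset (Rd d)}
    (h : ∀ p ∈ F, cnt p.1 ξ = cnt p.1 ξ') : indC (SF F) ξ = indC (SF F) ξ' := by
  have hmem : ξ ∈ SF F ↔ ξ' ∈ SF F := by
    constructor <;> intro hm p hp
    · rw [← h p hp]; exact hm p hp
    · rw [h p hp]; exact hm p hp
  unfold indC
  by_cases hξ : ξ ∈ SF F
  · rw [Set.indicator_of_mem hξ, Set.indicator_of_mem (hmem.mp hξ)]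
  · rw [Set.indicator_of_notMem hξ, Set.indicator_of_notMem (fun h' => hξ (hmem.mpr h'))]

lemma meas_star_SF (F₁ F₂ : Finset (Set (Rd d) × ℕ))
    (h₁ : ∀ p ∈ F₁, MeasurableSet p.1) (h₂ : ∀ p ∈ F₂, MeasurableSet p.1) :
    Measurable (starConv (indC (SF F₁)) (indC (SF F₂))) := by
  classical
  have h𝒜 : ∀ i : {p : Set (Rd d) × ℕ // p ∈ F₁ ∪ F₂},
      MeasurableSet ((fun p : {p : Set (Rd d) × ℕ // p ∈ F₁ ∪ F₂} => p.1.1) i) := by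
    rintro ⟨p, hp⟩
    rcases Finset.mem_union.mp hp with h | h
    exacts [h₁ p h, h₂ p h]
  refine measurable_cellinv _ h𝒜 _ ?_
  intro η η' hcnt
  have hcells : ∀ ξ ξ' : Finset (Rd d),
      (∀ s, cnt {x | ccell (fun p : {p : Set (Rd d) × ℕ // p ∈ F₁ ∪ F₂} => p.1.1) x = s} ξ
          = cnt {x | ccell (fun p : {p : Set (Rd d) × ℕ // p ∈ F₁ ∪ F₂} => p.1.1) x = s} ξ') →
      ∀ p, p ∈ F₁ ∪ F₂ → cnt p.1 ξ = cnt p.1 ξ' := by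
    intro ξ ξ' hk p hp
    exact (cnt_eq_sum_cells (fun q : {p : Set (Rd d) × ℕ // p ∈ F₁ ∪ F₂} => q.1.1)
        ⟨p, hp⟩ ξ).trans ((Finset.sum_congr rfl fun s _ => hk s).trans
      (cnt_eq_sum_cells (fun q : {p : Set (Rd d) × ℕ // p ∈ F₁ ∪ F₂} => q.1.1) ⟨p, hp⟩ ξ').symm)
  refine starConv_invariant' _ _ _ ?_ ?_ η η' hcnt
  · intro ξ ξ' hk
    exact indC_eq_of_cnt (fun p hp => hcells ξ ξ' hk p (Finset.mem_union_left _ hp))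
  · intro ξ ξ' hk
    exact indC_eq_of_cnt (fun p hp => hcells ξ ξ' hk p (Finset.mem_union_right _ hp))

end KSAux
namespace KSAux

variable {d : ℕ}

lemma starConv_indC_empty_left (v : Finset (Rd d) → ℂ) :
    starConv (indC (∅ : Set (Finset (Rd d)))) v = fun _ => 0 := by
  refine Eq.trans ?_ (starConv_zero_left v)
  refine starConv_congr ?_ (fun _ => rfl)
  intro ξ; simp [indC]

lemma starConv_indC_empty_right (u : Finset (Rd d) → ℂ) :
    starConv u (indC (∅ : Set (Finset (Rd d)))) = fun _ => 0 := by
  refine Eq.trans ?_ (starConv_zero_right u)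
  refine starConv_congr (fun _ => rfl) ?_
  intro ξ; simp [indC]

lemma univ_eq_SF_empty : (Set.univ : Set (Finset (Rd d))) = SF (∅ : Finset (Set (Rd d) × ℕ)) := by
  ext η; simp [SF]

lemma meas_star_indC_right (F₂ : Finset (Set (Rd d) × ℕ))
    (h₂ : ∀ p ∈ F₂, MeasurableSet p.1) :
    ∀ ⦃S : Set (Finset (Rd d))⦄, MeasurableSet S →
      Measurable (starConv (indC S) (indC (SF F₂))) := by
  refine MeasurableSpace.induction_on_inter measSpace_eq isPi ?_ ?_ ?_ ?_
  · rw [starConv_indC_empty_left]; exact measurable_const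
  · rintro t ⟨F₁, h₁, rfl⟩
    exact meas_star_SF F₁ F₂ h₁ h₂
  · intro t ht hmeas
    have hsub : starConv (indC tᶜ) (indC (SF F₂))
        = fun η => starConv (indC Set.univ) (indC (SF F₂)) η
          - starConv (indC t) (indC (SF F₂)) η := by
      refine Eq.trans ?_ (starConv_sub_left (indC Set.univ) (indC t) (indC (SF F₂)))
      refine starConv_congr ?_ (fun _ => rfl)
      intro ξ
      by_cases hξ : ξ ∈ t <;> simp [indC, Set.indicator, hξ]
    rw [hsub]
    refine Measurable.sub ?_ hmeas
    rw [univ_eq_SF_empty]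
    exact meas_star_SF ∅ F₂ (by simp) h₂
  · intro f hdisj hfm hC
    have hpart : ∀ k : ℕ,
        Measurable (starConv (indC (⋃ i ∈ Finset.range k, f i)) (indC (SF F₂))) := by
      intro k
      induction k with
      | zero =>
        have hz : (⋃ i ∈ Finset.range 0, f i) = (∅ : Set (Finset (Rd d))) := by simp
        rw [hz, starConv_indC_empty_left]; exact measurable_const
      | succ k ih =>
        have hdis : Disjoint (⋃ i ∈ Finset.range k, f i) (f k) := by
          refine Set.disjoint_left.mpr ?_
          rintro ξ hξ hξk
          rw [Set.mem_iUnion₂] at hξ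
          obtain ⟨i, hi, hfi⟩ := hξ
          exact Set.disjoint_left.mp (hdisj (Nat.ne_of_lt (Finset.mem_range.mp hi))) hfi hξk
        have hset : (⋃ i ∈ Finset.range (k+1), f i)
            = (⋃ i ∈ Finset.range k, f i) ∪ f k := by
          rw [Finset.range_add_one]
          rw [show (⋃ i ∈ insert k (Finset.range k), f i)
              = f k ∪ ⋃ i ∈ Finset.range k, f i from by simp]
          exact Set.union_comm _ _
        have hadd : starConv (indC (⋃ i ∈ Finset.range (k+1), f i)) (indC (SF F₂))
            = fun η => starConv (indC (⋃ i ∈ Finset.range k, f i)) (indC (SF F₂)) η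
              + starConv (indC (f k)) (indC (SF F₂)) η := by
          refine Eq.trans ?_ (starConv_add_left _ _ _)
          refine starConv_congr ?_ (fun _ => rfl)
          intro ξ
          rw [hset]
          unfold indC
          rw [Set.indicator_union_of_disjoint hdis]
        rw [hadd]
        exact ih.add (hC k)
    refine measurable_of_tendsto_metrizable hpart ?_
    rw [tendsto_pi_nhds]
    intro η
    have hev : ∀ᶠ k in Filter.atTop,
        starConv (indC (⋃ i ∈ Finset.range k, f i)) (indC (SF F₂)) η
          = starConv (indC (⋃ i, f i)) (indC (SF F₂)) η := by
      classical
      set K := η.powerset.sup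
        (fun ξ => if h : ξ ∈ ⋃ i, f i then (Set.mem_iUnion.mp h).choose + 1 else 0) with hK
      refine Filter.eventually_atTop.mpr ⟨K, fun k hk => ?_⟩
      refine starConv_congr_on ?_ (fun _ _ => rfl)
      intro ξ hξ
      by_cases hmem : ξ ∈ ⋃ i, f i
      · have hi0 : ξ ∈ f (Set.mem_iUnion.mp hmem).choose := (Set.mem_iUnion.mp hmem).choose_spec
        have hle : (Set.mem_iUnion.mp hmem).choose + 1 ≤ K := by
          have hls := Finset.le_sup
            (f := fun ξ => if h : ξ ∈ ⋃ i, f i then (Set.mem_iUnion.mp h).choose + 1 else 0)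
            (Finset.mem_powerset.mpr hξ)
          simp only [dif_pos hmem] at hls
          exact hls
        have hmem' : ξ ∈ ⋃ i ∈ Finset.range k, f i := by
          rw [Set.mem_iUnion₂]
          refine ⟨(Set.mem_iUnion.mp hmem).choose, Finset.mem_range.mpr (by omega), hi0⟩
        unfold indC
        rw [Set.indicator_of_mem hmem', Set.indicator_of_mem hmem]
      · have hmem' : ξ ∉ ⋃ i ∈ Finset.range k, f i := by
          intro hc
          rw [Set.mem_iUnion₂] at hc
          obtain ⟨i, _, hfi⟩ := hc
          exact hmem (Set.mem_iUnion.mpr ⟨i, hfi⟩)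
        unfold indC
        rw [Set.indicator_of_notMem hmem', Set.indicator_of_notMem hmem]
    exact Filter.Tendsto.congr' (hev.mono fun k hk => hk.symm) tendsto_const_nhds

lemma meas_star_indC {S : Set (Finset (Rd d))} (hS : MeasurableSet S) :
    ∀ ⦃T : Set (Finset (Rd d))⦄, MeasurableSet T →
      Measurable (starConv (indC S) (indC T)) := by
  refine MeasurableSpace.induction_on_inter measSpace_eq isPi ?_ ?_ ?_ ?_
  · rw [starConv_indC_empty_right]; exact measurable_const
  · rintro t ⟨F₂, h₂, rfl⟩
    exact meas_star_indC_right F₂ h₂ hS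
  · intro t ht hmeas
    have hsub : starConv (indC S) (indC tᶜ)
        = fun η => starConv (indC S) (indC Set.univ) η - starConv (indC S) (indC t) η := by
      refine Eq.trans ?_ (starConv_sub_right (indC S) (indC Set.univ) (indC t))
      refine starConv_congr (fun _ => rfl) ?_
      intro ξ
      by_cases hξ : ξ ∈ t <;> simp [indC, Set.indicator, hξ]
    rw [hsub]
    refine Measurable.sub ?_ hmeas
    rw [univ_eq_SF_empty]
    exact meas_star_indC_right ∅ (by simp) hS
  · intro f hdisj hfm hC
    have hpart : ∀ k : ℕ,
        Measurable (starConv (indC S) (indC (⋃ i ∈ Finset.range k, f i))) := by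
      intro k
      induction k with
      | zero =>
        have hz : (⋃ i ∈ Finset.range 0, f i) = (∅ : Set (Finset (Rd d))) := by simp
        rw [hz, starConv_indC_empty_right]; exact measurable_const
      | succ k ih =>
        have hdis : Disjoint (⋃ i ∈ Finset.range k, f i) (f k) := by
          refine Set.disjoint_left.mpr ?_
          rintro ξ hξ hξk
          rw [Set.mem_iUnion₂] at hξ
          obtain ⟨i, hi, hfi⟩ := hξ
          exact Set.disjoint_left.mp (hdisj (Nat.ne_of_lt (Finset.mem_range.mp hi))) hfi hξk
        have hset : (⋃ i ∈ Finset.range (k+1), f i)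
            = (⋃ i ∈ Finset.range k, f i) ∪ f k := by
          rw [Finset.range_add_one]
          rw [show (⋃ i ∈ insert k (Finset.range k), f i)
              = f k ∪ ⋃ i ∈ Finset.range k, f i from by simp]
          exact Set.union_comm _ _
        have hadd : starConv (indC S) (indC (⋃ i ∈ Finset.range (k+1), f i))
            = fun η => starConv (indC S) (indC (⋃ i ∈ Finset.range k, f i)) η
              + starConv (indC S) (indC (f k)) η := by
          refine Eq.trans ?_ (starConv_add_right _ _ _)
          refine starConv_congr (fun _ => rfl) ?_
          intro ξ
          rw [hset]
          unfold indC
          rw [Set.indicator_union_of_disjoint hdis]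
        rw [hadd]
        exact ih.add (hC k)
    refine measurable_of_tendsto_metrizable hpart ?_
    rw [tendsto_pi_nhds]
    intro η
    have hev : ∀ᶠ k in Filter.atTop,
        starConv (indC S) (indC (⋃ i ∈ Finset.range k, f i)) η
          = starConv (indC S) (indC (⋃ i, f i)) η := by
      classical
      set K := η.powerset.sup
        (fun ξ => if h : ξ ∈ ⋃ i, f i then (Set.mem_iUnion.mp h).choose + 1 else 0) with hK
      refine Filter.eventually_atTop.mpr ⟨K, fun k hk => ?_⟩
      refine starConv_congr_on (fun _ _ => rfl) ?_
      intro ξ hξ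
      by_cases hmem : ξ ∈ ⋃ i, f i
      · have hi0 : ξ ∈ f (Set.mem_iUnion.mp hmem).choose := (Set.mem_iUnion.mp hmem).choose_spec
        have hle : (Set.mem_iUnion.mp hmem).choose + 1 ≤ K := by
          have hls := Finset.le_sup
            (f := fun ξ => if h : ξ ∈ ⋃ i, f i then (Set.mem_iUnion.mp h).choose + 1 else 0)
            (Finset.mem_powerset.mpr hξ)
          simp only [dif_pos hmem] at hls
          exact hls
        have hmem' : ξ ∈ ⋃ i ∈ Finset.range k, f i := by
          rw [Set.mem_iUnion₂]
          refine ⟨(Set.mem_iUnion.mp hmem).choose, Finset.mem_range.mpr (by omega), hi0⟩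
        unfold indC
        rw [Set.indicator_of_mem hmem', Set.indicator_of_mem hmem]
      · have hmem' : ξ ∉ ⋃ i ∈ Finset.range k, f i := by
          intro hc
          rw [Set.mem_iUnion₂] at hc
          obtain ⟨i, _, hfi⟩ := hc
          exact hmem (Set.mem_iUnion.mpr ⟨i, hfi⟩)
        unfold indC
        rw [Set.indicator_of_notMem hmem', Set.indicator_of_notMem hmem]
    exact Filter.Tendsto.congr' (hev.mono fun k hk => hk.symm) tendsto_const_nhds

lemma meas_star_simple (φ ψ : MeasureTheory.SimpleFunc (Finset (Rd d)) ℂ) :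
    Measurable (starConv ⇑φ ⇑ψ) := by
  have hcoe : ∀ (c : ℂ) (s : Set (Finset (Rd d))) (hs : MeasurableSet s) (ξ : Finset (Rd d)),
      (MeasureTheory.SimpleFunc.piecewise s hs
        (MeasureTheory.SimpleFunc.const _ c) (MeasureTheory.SimpleFunc.const _ 0)) ξ
        = c * indC s ξ := by
    intro c s hs ξ
    rw [MeasureTheory.SimpleFunc.coe_piecewise]
    by_cases hξ : ξ ∈ s <;> simp [Set.piecewise, indC, hξ]
  induction φ using MeasureTheory.SimpleFunc.induction generalizing ψ with
  | @const c s hs =>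
    induction ψ using MeasureTheory.SimpleFunc.induction with
    | @const c' t hs' =>
      have hre : starConv
          ⇑(MeasureTheory.SimpleFunc.piecewise s hs
            (MeasureTheory.SimpleFunc.const _ c) (MeasureTheory.SimpleFunc.const _ 0))
          ⇑(MeasureTheory.SimpleFunc.piecewise t hs'
            (MeasureTheory.SimpleFunc.const _ c') (MeasureTheory.SimpleFunc.const _ 0))
          = fun η => c * (c' * starConv (indC s) (indC t) η) := by
        refine Eq.trans (starConv_congr (hcoe c s hs) (hcoe c' t hs')) ?_
        rw [starConv_mul_left]
        have := starConv_mul_right c' (indC s) (indC t)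
        rw [this]
      rw [hre]
      exact (((meas_star_indC hs) hs').const_mul c').const_mul c
    | @add v1 v2 hdis2 h1 h2 =>
      have hre : starConv
          ⇑(MeasureTheory.SimpleFunc.piecewise s hs
            (MeasureTheory.SimpleFunc.const _ c) (MeasureTheory.SimpleFunc.const _ 0))
          ⇑(v1 + v2)
          = fun η => starConv
            ⇑(MeasureTheory.SimpleFunc.piecewise s hs
              (MeasureTheory.SimpleFunc.const _ c) (MeasureTheory.SimpleFunc.const _ 0)) ⇑v1 η
            + starConv
            ⇑(MeasureTheory.SimpleFunc.piecewise s hs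
              (MeasureTheory.SimpleFunc.const _ c) (MeasureTheory.SimpleFunc.const _ 0)) ⇑v2 η := by
        refine Eq.trans ?_ (starConv_add_right _ ⇑v1 ⇑v2)
        exact starConv_congr (fun _ => rfl) (fun ξ => by simp)
      rw [hre]
      exact h1.add h2
  | @add u1 u2 hdis h1 h2 =>
    have hre : starConv ⇑(u1 + u2) ⇑ψ
        = fun η => starConv ⇑u1 ⇑ψ η + starConv ⇑u2 ⇑ψ η := by
      refine Eq.trans ?_ (starConv_add_left ⇑u1 ⇑u2 ⇑ψ)
      exact starConv_congr (fun ξ => by simp) (fun _ => rfl)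
    rw [hre]
    exact (h1 ψ).add (h2 ψ)

lemma meas_starConv {u v : Finset (Rd d) → ℂ} (hu : Measurable u) (hv : Measurable v) :
    Measurable (starConv u v) := by
  let φ : ℕ → MeasureTheory.SimpleFunc (Finset (Rd d)) ℂ :=
    fun n => MeasureTheory.SimpleFunc.approxOn u hu Set.univ 0 (Set.mem_univ 0) n
  let ψ : ℕ → MeasureTheory.SimpleFunc (Finset (Rd d)) ℂ :=
    fun n => MeasureTheory.SimpleFunc.approxOn v hv Set.univ 0 (Set.mem_univ 0) n
  have hφ : ∀ ξ, Filter.Tendsto (fun n => φ n ξ) Filter.atTop (nhds (u ξ)) := fun ξ =>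
    MeasureTheory.SimpleFunc.tendsto_approxOn hu (Set.mem_univ 0) (by simp)
  have hψ : ∀ ξ, Filter.Tendsto (fun n => ψ n ξ) Filter.atTop (nhds (v ξ)) := fun ξ =>
    MeasureTheory.SimpleFunc.tendsto_approxOn hv (Set.mem_univ 0) (by simp)
  refine measurable_of_tendsto_metrizable (f := fun n => starConv ⇑(φ n) ⇑(ψ n))
    (fun n => meas_star_simple (φ n) (ψ n)) ?_
  rw [tendsto_pi_nhds]
  intro η
  unfold starConv
  refine tendsto_finset_sum _ fun η₁ _ => tendsto_finset_sum _ fun η₂ _ => ?_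
  exact (hφ _).mul (hψ _)

end KSAux
namespace KSAux

variable {d : ℕ}

lemma starConv_support {G₁ G₂ : Finset (Rd d) → ℂ} {N₁ N₂ : ℕ} {Λ₁ Λ₂ : Set (Rd d)}
    (hs₁ : ∀ η : Finset (Rd d), ¬((η : Set (Rd d)) ⊆ Λ₁ ∧ η.card ≤ N₁) → G₁ η = 0)
    (hs₂ : ∀ η : Finset (Rd d), ¬((η : Set (Rd d)) ⊆ Λ₂ ∧ η.card ≤ N₂) → G₂ η = 0)
    (η : Finset (Rd d)) (h : ¬((η : Set (Rd d)) ⊆ Λ₁ ∪ Λ₂ ∧ η.card ≤ N₁ + N₂)) :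
    starConv G₁ G₂ η = 0 := by
  unfold starConv
  refine Finset.sum_eq_zero fun η₁ h₁ => Finset.sum_eq_zero fun η₂ h₂ => ?_
  rw [Finset.mem_powerset] at h₁ h₂
  by_cases hG1 : G₁ (η₁ ∪ η₂) = 0
  · rw [hG1, zero_mul]
  by_cases hG2 : G₂ (η₂ ∪ ((η \ η₁) \ η₂)) = 0
  · rw [hG2, mul_zero]
  exfalso
  apply h
  have hc1 : (↑(η₁ ∪ η₂) : Set (Rd d)) ⊆ Λ₁ ∧ (η₁ ∪ η₂).card ≤ N₁ := by
    by_contra hcon; exact hG1 (hs₁ _ hcon)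
  have hc2 : (↑(η₂ ∪ ((η \ η₁) \ η₂)) : Set (Rd d)) ⊆ Λ₂
      ∧ (η₂ ∪ ((η \ η₁) \ η₂)).card ≤ N₂ := by
    by_contra hcon; exact hG2 (hs₂ _ hcon)
  have hη2 : η₂ ∪ ((η \ η₁) \ η₂) = η \ η₁ := Finset.union_sdiff_of_subset h₂
  have hη : η₁ ∪ (η \ η₁) = η := Finset.union_sdiff_of_subset h₁
  constructor
  · intro x hx
    have hxη : x ∈ η := Finset.mem_coe.mp hx
    rw [← hη, Finset.mem_union] at hxη
    rcases hxη with hx1 | hx2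
    · exact Set.mem_union_left _ (hc1.1 (Finset.mem_coe.mpr (Finset.mem_union_left _ hx1)))
    · rw [← hη2] at hx2
      exact Set.mem_union_right _ (hc2.1 (Finset.mem_coe.mpr hx2))
  · have hcard : (η \ η₁).card + η₁.card = η.card := Finset.card_sdiff_add_card_eq_card h₁
    have e1 : η₁.card ≤ N₁ :=
      le_trans (Finset.card_le_card Finset.subset_union_left) hc1.2
    have e2 : (η \ η₁).card ≤ N₂ := by rw [← hη2]; exact hc2.2
    omega

lemma starConv_bound {G₁ G₂ : Finset (Rd d) → ℂ} {L₁ L₂ : ℝ} {N₁ N₂ : ℕ} {Λ₁ Λ₂ : Set (Rd d)}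
    (hb₁ : ∀ η, ‖G₁ η‖ ≤ L₁) (hb₂ : ∀ η, ‖G₂ η‖ ≤ L₂)
    (hs₁ : ∀ η : Finset (Rd d), ¬((η : Set (Rd d)) ⊆ Λ₁ ∧ η.card ≤ N₁) → G₁ η = 0)
    (hs₂ : ∀ η : Finset (Rd d), ¬((η : Set (Rd d)) ⊆ Λ₂ ∧ η.card ≤ N₂) → G₂ η = 0)
    (η : Finset (Rd d)) :
    ‖starConv G₁ G₂ η‖
      ≤ ((2 ^ (N₁ + N₂) : ℕ) : ℝ) * (((2 ^ (N₁ + N₂) : ℕ) : ℝ) * (L₁ * L₂)) := by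
  have hL₁ : 0 ≤ L₁ := le_trans (norm_nonneg _) (hb₁ ∅)
  have hL₂ : 0 ≤ L₂ := le_trans (norm_nonneg _) (hb₂ ∅)
  by_cases hcard : η.card ≤ N₁ + N₂
  · have hpow : ∀ ξ : Finset (Rd d), ξ ⊆ η →
        ((ξ.powerset.card : ℕ) : ℝ) ≤ ((2 ^ (N₁ + N₂) : ℕ) : ℝ) := by
      intro ξ hξ
      rw [Finset.card_powerset]
      refine Nat.cast_le.mpr (Nat.pow_le_pow_right (by norm_num)
        (le_trans (Finset.card_le_card hξ) hcard))
    calc ‖starConv G₁ G₂ η‖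
        ≤ ∑ η₁ ∈ η.powerset, ‖∑ η₂ ∈ (η \ η₁).powerset,
            G₁ (η₁ ∪ η₂) * G₂ (η₂ ∪ ((η \ η₁) \ η₂))‖ := norm_sum_le _ _
      _ ≤ ∑ _η₁ ∈ η.powerset, (((2 ^ (N₁ + N₂) : ℕ) : ℝ) * (L₁ * L₂)) := by
          refine Finset.sum_le_sum fun η₁ h₁ => ?_
          calc ‖∑ η₂ ∈ (η \ η₁).powerset,
                G₁ (η₁ ∪ η₂) * G₂ (η₂ ∪ ((η \ η₁) \ η₂))‖
              ≤ ∑ η₂ ∈ (η \ η₁).powerset,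
                  ‖G₁ (η₁ ∪ η₂) * G₂ (η₂ ∪ ((η \ η₁) \ η₂))‖ :=
                norm_sum_le _ _
            _ ≤ ∑ _η₂ ∈ (η \ η₁).powerset, (L₁ * L₂) := by
                refine Finset.sum_le_sum fun η₂ h₂ => ?_
                rw [norm_mul]
                exact mul_le_mul (hb₁ _) (hb₂ _) (norm_nonneg _) hL₁
            _ = (((η \ η₁).powerset.card : ℕ) : ℝ) * (L₁ * L₂) := by
                rw [Finset.sum_const, nsmul_eq_mul]
            _ ≤ ((2 ^ (N₁ + N₂) : ℕ) : ℝ) * (L₁ * L₂) :=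
                mul_le_mul_of_nonneg_right (hpow _ Finset.sdiff_subset) (by positivity)
      _ = ((η.powerset.card : ℕ) : ℝ) * (((2 ^ (N₁ + N₂) : ℕ) : ℝ) * (L₁ * L₂)) := by
          rw [Finset.sum_const, nsmul_eq_mul]
      _ ≤ ((2 ^ (N₁ + N₂) : ℕ) : ℝ) * (((2 ^ (N₁ + N₂) : ℕ) : ℝ) * (L₁ * L₂)) :=
          mul_le_mul_of_nonneg_right (hpow η (subset_refl η)) (by positivity)
  · rw [starConv_support hs₁ hs₂ η (fun hc => hcard hc.2)]
    rw [norm_zero]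
    positivity

lemma Ktrans_eq_sum {G : Finset (Rd d) → ℂ} (γ : Config d) {Λ : Set (Rd d)}
    (hsupp : ∀ η : Finset (Rd d), ¬((η : Set (Rd d)) ⊆ Λ) → G η = 0)
    {T : Finset (Rd d)} (hT : (T : Set (Rd d)) = γ.1 ∩ Λ) :
    Ktrans G γ = ∑ η ∈ T.powerset, G η := by
  classical
  unfold Ktrans
  have hTsub : (T : Set (Rd d)) ⊆ γ.1 := by rw [hT]; exact Set.inter_subset_left
  have hzero : ∀ b : {η : Finset (Rd d) // (η : Set (Rd d)) ⊆ γ.1},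
      b ∉ T.powerset.subtype (fun η : Finset (Rd d) => (η : Set (Rd d)) ⊆ γ.1) → G b.1 = 0 := by
    rintro ⟨η, hη⟩ hb
    rw [Finset.mem_subtype] at hb
    apply hsupp
    intro hΛ
    apply hb
    rw [Finset.mem_powerset, ← Finset.coe_subset, hT]
    exact Set.subset_inter hη hΛ
  rw [tsum_eq_sum hzero]
  refine Finset.sum_subtype_of_mem _ ?_
  intro η hη
  exact le_trans (Finset.coe_subset.mpr (Finset.mem_powerset.mp hη)) hTsub

private lemma sig3_eq {X : Type} {a a' b b' c c' : Finset X} (h1 : a = a') (h2 : b = b')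
    (h3 : c = c') :
    (⟨a, ⟨b, c⟩⟩ : Σ _ : Finset X, Σ _ : Finset X, Finset X) = ⟨a', ⟨b', c'⟩⟩ := by
  subst h1; subst h2; subst h3; rfl

lemma sum_powerset_starConv (u v : Finset (Rd d) → ℂ) (T : Finset (Rd d)) :
    ∑ η ∈ T.powerset, starConv u v η
      = (∑ A ∈ T.powerset, u A) * (∑ B ∈ T.powerset, v B) := by
  classical
  rw [Finset.sum_mul_sum, ← Finset.sum_product']
  have hL : ∑ η ∈ T.powerset, starConv u v η
      = ∑ q ∈ T.powerset.sigma (fun η => η.powerset.sigma fun η₁ => (η \ η₁).powerset),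
          u (q.2.1 ∪ q.2.2) * v (q.2.2 ∪ ((q.1 \ q.2.1) \ q.2.2)) := by
    rw [Finset.sum_sigma]
    refine Finset.sum_congr rfl fun η _ => ?_
    rw [Finset.sum_sigma]
    rfl
  rw [hL]
  refine Finset.sum_nbij' (fun q => (q.2.1 ∪ q.2.2, q.1 \ q.2.1))
    (fun p => ⟨p.1 ∪ p.2, ⟨p.1 \ p.2, p.1 ∩ p.2⟩⟩) ?_ ?_ ?_ ?_ ?_
  · rintro ⟨η, η₁, η₂⟩ hq
    simp only [Finset.mem_sigma, Finset.mem_powerset] at hq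
    obtain ⟨hη, h₁, h₂⟩ := hq
    rw [Finset.mem_product, Finset.mem_powerset, Finset.mem_powerset]
    have h₂' : η₂ ⊆ η := h₂.trans Finset.sdiff_subset
    exact ⟨(Finset.union_subset h₁ h₂').trans hη, (Finset.sdiff_subset).trans hη⟩
  · rintro ⟨A, B⟩ hp
    rw [Finset.mem_product, Finset.mem_powerset, Finset.mem_powerset] at hp
    obtain ⟨hA, hB⟩ := hp
    simp only [Finset.mem_sigma, Finset.mem_powerset]
    refine ⟨Finset.union_subset hA hB, Finset.sdiff_subset.trans Finset.subset_union_left, ?_⟩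
    intro x hx
    rw [Finset.mem_inter] at hx
    rw [Finset.mem_sdiff]
    exact ⟨Finset.mem_union_left _ hx.1, fun hc => (Finset.mem_sdiff.mp hc).2 hx.2⟩
  · rintro ⟨η, η₁, η₂⟩ hq
    simp only [Finset.mem_sigma, Finset.mem_powerset] at hq
    obtain ⟨hη, h₁, h₂⟩ := hq
    have f1 : ∀ x, x ∈ η₁ → x ∈ η := fun x hx => h₁ hx
    have f2 : ∀ x, x ∈ η₂ → x ∈ η ∧ x ∉ η₁ := fun x hx => Finset.mem_sdiff.mp (h₂ hx)
    refine sig3_eq ?_ ?_ ?_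
    · ext x
      simp only [Finset.mem_union, Finset.mem_sdiff]
      constructor
      · rintro ((hx | hx) | ⟨hx, _⟩)
        · exact f1 x hx
        · exact (f2 x hx).1
        · exact hx
      · intro hx
        by_cases hx1 : x ∈ η₁
        · exact Or.inl (Or.inl hx1)
        · exact Or.inr ⟨hx, hx1⟩
    · ext x
      simp only [Finset.mem_sdiff, Finset.mem_union]
      constructor
      · rintro ⟨hx | hx, hns⟩
        · exact hx
        · exact absurd ⟨(f2 x hx).1, (f2 x hx).2⟩ hns
      · intro hx
        exact ⟨Or.inl hx, fun hc => hc.2 hx⟩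
    · ext x
      simp only [Finset.mem_inter, Finset.mem_union, Finset.mem_sdiff]
      constructor
      · rintro ⟨hx | hx, hη', hn1⟩
        · exact absurd hx hn1
        · exact hx
      · intro hx
        exact ⟨Or.inr hx, (f2 x hx).1, (f2 x hx).2⟩
  · rintro ⟨A, B⟩ hp
    rw [Finset.mem_product, Finset.mem_powerset, Finset.mem_powerset] at hp
    have c1 : (A \ B) ∪ (A ∩ B) = A := Finset.sdiff_union_inter A B
    have c2 : (A ∪ B) \ (A \ B) = B := by
      ext x
      simp only [Finset.mem_sdiff, Finset.mem_union]
      constructor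
      · rintro ⟨hA | hB, hns⟩
        · by_cases hxB : x ∈ B
          · exact hxB
          · exact absurd ⟨hA, hxB⟩ hns
        · exact hB
      · intro hx
        exact ⟨Or.inr hx, fun hc => hc.2 hx⟩
    rw [Prod.mk.injEq]
    exact ⟨c1, c2⟩
  · rintro ⟨η, η₁, η₂⟩ hq
    simp only [Finset.mem_sigma, Finset.mem_powerset] at hq
    obtain ⟨hη, h₁, h₂⟩ := hq
    have harg : η₂ ∪ ((η \ η₁) \ η₂) = η \ η₁ := Finset.union_sdiff_of_subset h₂
    rw [harg]

end KSAux
/-- For all `G₁, G₂ ∈ B_bs(Γ₀)` one has `G₁ ⋆ G₂ ∈ B_bs(Γ₀)` and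
`K(G₁ ⋆ G₂) = (KG₁)·(KG₂)` as functions on `Γ`. -/
theorem Ktrans_starConv {d : ℕ} (G₁ G₂ : Finset (Rd d) → ℂ)
    (h₁ : BddSuppC G₁) (h₂ : BddSuppC G₂) :
    BddSuppC (starConv G₁ G₂) ∧
      ∀ γ : Config d, Ktrans (starConv G₁ G₂) γ = Ktrans G₁ γ * Ktrans G₂ γ := by
  classical
  obtain ⟨hm₁, L₁, N₁, Λ₁, hΛ₁, hb₁, hs₁⟩ := h₁
  obtain ⟨hm₂, L₂, N₂, Λ₂, hΛ₂, hb₂, hs₂⟩ := h₂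
  constructor
  · refine ⟨KSAux.meas_starConv hm₁ hm₂,
      ((2 ^ (N₁ + N₂) : ℕ) : ℝ) * (((2 ^ (N₁ + N₂) : ℕ) : ℝ) * (L₁ * L₂)),
      N₁ + N₂, Λ₁ ∪ Λ₂, hΛ₁.union hΛ₂, ?_, ?_⟩
    · exact KSAux.starConv_bound hb₁ hb₂ hs₁ hs₂
    · exact KSAux.starConv_support hs₁ hs₂
  · intro γ
    have hfin : (γ.1 ∩ (Λ₁ ∪ Λ₂)).Finite := γ.2 _ (hΛ₁.union hΛ₂)
    have hT : (hfin.toFinset : Set (Rd d)) = γ.1 ∩ (Λ₁ ∪ Λ₂) := hfin.coe_toFinset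
    have hsupp₁ : ∀ η : Finset (Rd d), ¬((η : Set (Rd d)) ⊆ Λ₁ ∪ Λ₂) → G₁ η = 0 :=
      fun η hη => hs₁ η (fun hc => hη (hc.1.trans Set.subset_union_left))
    have hsupp₂ : ∀ η : Finset (Rd d), ¬((η : Set (Rd d)) ⊆ Λ₁ ∪ Λ₂) → G₂ η = 0 :=
      fun η hη => hs₂ η (fun hc => hη (hc.1.trans Set.subset_union_right))
    have hsuppstar : ∀ η : Finset (Rd d), ¬((η : Set (Rd d)) ⊆ Λ₁ ∪ Λ₂) →
        starConv G₁ G₂ η = 0 :=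
      fun η hη => KSAux.starConv_support hs₁ hs₂ η (fun hc => hη hc.1)
    rw [KSAux.Ktrans_eq_sum γ hsuppstar hT, KSAux.Ktrans_eq_sum γ hsupp₁ hT,
        KSAux.Ktrans_eq_sum γ hsupp₂ hT]
    exact KSAux.sum_powerset_starConv G₁ G₂ hfin.toFinset
end

section
/- Let φ be a pair potential satisfying conditions (I) and (S) with stability constant B, and let F = KG for G ∈ B_bs(Γ₀) with |G| ≤ L and G vanishing outside ⊔_{n=0}^N Γ_Λ⁽ⁿ⁾ for a compact Λ ⊂ ℝ^d. Then for every γ ∈ Γ the expression (HF)(γ) is well defined; more precisely, −(HF)(γ) = Σ_{x∈γ_Λ}(F(γ∖{x}) − F(γ)) + z∫_Λ e^{−E(x,γ)}(F(γ∪{x}) − F(γ)) dx, and the integral term is absolutely bounded by 2L e^{2B|γ|} (2 + |γ_Λ|)^N m(Λ), where m(Λ) is the Lebesgue volume of Λ. -/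
open MeasureTheory
open scoped BigOperators ENNReal Classical

section AuxGlauber

private lemma card_filter_card_le {α : Type*} [DecidableEq α] (T : Finset α) (N : ℕ) :
    (T.powerset.filter fun η => η.card ≤ N).card ≤ (1 + T.card) ^ N := by
  induction N with
  | zero =>
    have h : (T.powerset.filter fun η => η.card ≤ 0) ⊆ {∅} := by
      intro η hη
      simp only [Finset.mem_filter, Nat.le_zero, Finset.card_eq_zero] at hη
      simp [hη.2]
    simpa using Finset.card_le_card h
  | succ N ih =>
    have hsub : (T.powerset.filter fun η => η.card ≤ N + 1) ⊆
        (T.powerset.filter fun η => η.card ≤ N) ∪ T.powersetCard (N + 1) := by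
      intro η hη
      simp only [Finset.mem_filter, Finset.mem_powerset] at hη
      rcases Nat.lt_or_ge η.card (N + 1) with h | h
      · exact Finset.mem_union_left _
          (Finset.mem_filter.mpr ⟨Finset.mem_powerset.mpr hη.1, Nat.lt_succ_iff.mp h⟩)
      · exact Finset.mem_union_right _
          (Finset.mem_powersetCard.mpr ⟨hη.1, le_antisymm hη.2 h⟩)
    calc (T.powerset.filter fun η => η.card ≤ N + 1).card
        ≤ ((T.powerset.filter fun η => η.card ≤ N) ∪ T.powersetCard (N + 1)).card :=
          Finset.card_le_card hsub
      _ ≤ (T.powerset.filter fun η => η.card ≤ N).card + (T.powersetCard (N + 1)).card :=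
          Finset.card_union_le _ _
      _ ≤ (1 + T.card) ^ N + T.card ^ (N + 1) := by
          rw [Finset.card_powersetCard]
          exact Nat.add_le_add ih (Nat.choose_le_pow _ _)
      _ ≤ (1 + T.card) ^ N + (1 + T.card) ^ N * T.card := by
          have h : T.card ^ (N + 1) ≤ (1 + T.card) ^ N * T.card := by
            rw [pow_succ]
            exact Nat.mul_le_mul_right _ (Nat.pow_le_pow_left (Nat.le_add_left _ _) _)
          omega
      _ = (1 + T.card) ^ (N + 1) := by ring

private lemma ktrans_eq_sum {d : ℕ} (G : Finset (Rd d) → ℝ) (N : ℕ) (Λ : Set (Rd d))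
    (hsupp : ∀ η : Finset (Rd d), ¬((η : Set (Rd d)) ⊆ Λ ∧ η.card ≤ N) → G η = 0)
    (δ : Config d) (hT : (δ.1 ∩ Λ).Finite) :
    Ktrans G δ = ∑ η ∈ hT.toFinset.powerset, G η := by
  classical
  unfold Ktrans
  rw [tsum_eq_sum (s := hT.toFinset.powerset.subtype _) ?hz]
  case hz =>
    intro i hi
    by_contra hG
    have hΛsub : (i.1 : Set (Rd d)) ⊆ Λ ∧ i.1.card ≤ N := by
      by_contra h; exact hG (hsupp i.1 h)
    apply hi
    rw [Finset.mem_subtype, Finset.mem_powerset]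
    intro x hx
    rw [Set.Finite.mem_toFinset]
    exact ⟨i.2 (Finset.mem_coe.mpr hx), hΛsub.1 (Finset.mem_coe.mpr hx)⟩
  exact Finset.sum_subtype_of_mem _ (fun η hη => by
    rw [Finset.mem_powerset] at hη
    intro x hx
    exact ((Set.Finite.mem_toFinset hT).mp (hη (Finset.mem_coe.mp hx))).1)

private lemma ktrans_abs_le {d : ℕ} (G : Finset (Rd d) → ℝ) (L : ℝ) (N : ℕ) (Λ : Set (Rd d))
    (hbd : ∀ η, |G η| ≤ L)
    (hsupp : ∀ η : Finset (Rd d), ¬((η : Set (Rd d)) ⊆ Λ ∧ η.card ≤ N) → G η = 0)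
    (δ : Config d) (hT : (δ.1 ∩ Λ).Finite) :
    |Ktrans G δ| ≤ L * (1 + ((δ.1 ∩ Λ).ncard : ℝ)) ^ N := by
  classical
  have hL0 : 0 ≤ L := le_trans (abs_nonneg _) (hbd ∅)
  rw [ktrans_eq_sum G N Λ hsupp δ hT]
  have h1 : ∑ η ∈ hT.toFinset.powerset.filter (fun η => η.card ≤ N), G η
      = ∑ η ∈ hT.toFinset.powerset, G η :=
    Finset.sum_subset (Finset.filter_subset _ _) (fun η hη hη' => by
      apply hsupp
      intro h
      exact hη' (Finset.mem_filter.mpr ⟨hη, h.2⟩))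
  rw [← h1]
  calc |∑ η ∈ hT.toFinset.powerset.filter (fun η => η.card ≤ N), G η|
      ≤ ∑ η ∈ hT.toFinset.powerset.filter (fun η => η.card ≤ N), |G η| :=
        Finset.abs_sum_le_sum_abs _ _
    _ ≤ ∑ _η ∈ hT.toFinset.powerset.filter (fun η => η.card ≤ N), L :=
        Finset.sum_le_sum fun η _ => hbd η
    _ = ((hT.toFinset.powerset.filter (fun η => η.card ≤ N)).card : ℝ) * L := by
        rw [Finset.sum_const, nsmul_eq_mul]
    _ ≤ (((1 + hT.toFinset.card) ^ N : ℕ) : ℝ) * L := by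
        have hc := card_filter_card_le hT.toFinset N
        exact mul_le_mul_of_nonneg_right (by exact_mod_cast hc) hL0
    _ = L * (1 + ((δ.1 ∩ Λ).ncard : ℝ)) ^ N := by
        rw [Set.ncard_eq_toFinset_card _ hT]
        push_cast
        ring

private lemma toReal_ge_negtwoB {d : ℕ} (V : PairPotential d) (B : ℝ) (hS : Stable V B)
    (a : Rd d) (ha : a ≠ 0) : -(2 * B) ≤ (V.toFun a).toReal := by
  classical
  have h := hS.2 {a, 0}
  have hcard : ({a, 0} : Finset (Rd d)).card = 2 := by
    rw [Finset.card_insert_of_notMem (by simp [ha]), Finset.card_singleton]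
  rw [hcard] at h
  have hE : pairEnergy V {a, 0} = (V.toFun a).toReal := by
    unfold pairEnergy
    rw [Finset.sum_pair ha]
    have h1 : ({a, 0} : Finset (Rd d)).erase a = {0} := by
      rw [Finset.erase_insert (by simp [ha])]
    have h2 : ({a, 0} : Finset (Rd d)).erase 0 = {a} := by
      rw [Finset.erase_insert_of_ne ha, Finset.erase_singleton]
      simp
    rw [h1, h2, Finset.sum_singleton, Finset.sum_singleton, sub_zero, zero_sub,
      V.symm' a]
    ring
  rw [hE] at h
  push_cast at h
  linarith

private lemma expNegRelEnergy_nonneg {d : ℕ} (V : PairPotential d) (x : Rd d)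
    (γ : Set (Rd d)) : 0 ≤ expNegRelEnergy V x γ := by
  unfold expNegRelEnergy
  split_ifs
  · exact (Real.exp_pos _).le
  · exact le_refl 0

private lemma expNegRelEnergy_le {d : ℕ} (V : PairPotential d) (B : ℝ) (hS : Stable V B)
    (γ : Set (Rd d)) (hfin : γ.Finite) (x : Rd d) (hx : x ∉ γ) :
    expNegRelEnergy V x γ ≤ Real.exp (2 * B * γ.ncard) := by
  classical
  unfold expNegRelEnergy
  split_ifs with h
  · apply Real.exp_le_exp.mpr
    haveI : Fintype γ := hfin.fintype
    rw [tsum_fintype]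
    have hterm : ∀ y : γ, -(2 * B) ≤ (V.toFun (x - (y : Rd d))).toReal := fun y =>
      toReal_ge_negtwoB V B hS _ (sub_ne_zero.mpr (fun he => hx (he ▸ y.2)))
    have hcard : ((Finset.univ : Finset γ).card : ℝ) = (γ.ncard : ℝ) := by
      rw [Finset.card_univ, ← Nat.card_coe_set_eq, Nat.card_eq_fintype_card]
    have hsum : ((Finset.univ : Finset γ).card : ℝ) * (-(2 * B))
        ≤ ∑ y : γ, (V.toFun (x - (y : Rd d))).toReal := by
      calc ((Finset.univ : Finset γ).card : ℝ) * (-(2 * B))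
          = ∑ _y : γ, (-(2 * B)) := by rw [Finset.sum_const, nsmul_eq_mul]
        _ ≤ _ := Finset.sum_le_sum (fun y _ => hterm y)
    rw [hcard] at hsum
    linarith
  · exact (Real.exp_pos _).le

end AuxGlauber

/-- For a pair potential satisfying (I) and (S) with stability constant `B`, and
`F = KG` with `G ∈ B_bs(Γ₀)`, `|G| ≤ L`, `G` vanishing outside `⊔_{n≤N} Γ_Λ⁽ⁿ⁾`:
`(HF)(γ)` is well defined for every `γ ∈ Γ`; more precisely
`-(HF)(γ) = Σ_{x∈γ_Λ}(F(γ∖{x})-F(γ)) + z ∫_Λ e^{-E(x,γ)}(F(γ∪{x})-F(γ)) dx`,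
and the integral term is absolutely bounded by `2L e^{2B|γ|}(2+|γ_Λ|)^N m(Λ)`. -/
theorem glauber_welldefined {d : ℕ} (V : PairPotential d) (B : ℝ)
    (hS : Stable V B) (hI : CondI V) (z : ℝ) (hz : 0 < z)
    (G : Finset (Rd d) → ℝ) (hGm : Measurable G) (L : ℝ) (hL : 0 ≤ L) (N : ℕ)
    (Λ : Set (Rd d)) (hΛ : IsCompact Λ)
    (hbd : ∀ η, |G η| ≤ L)
    (hsupp : ∀ η : Finset (Rd d), ¬((η : Set (Rd d)) ⊆ Λ ∧ η.card ≤ N) → G η = 0)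
    (γ : Config d) :
    Summable (fun x : γ.1 => Ktrans G (γ.erasePt x) - Ktrans G γ) ∧
      -(glauber V z (Ktrans G) γ) =
        (∑ᶠ x ∈ γ.1 ∩ Λ, (Ktrans G (γ.erasePt x) - Ktrans G γ)) +
          z * ∫ x in Λ, expNegRelEnergy V x γ.1 *
            (Ktrans G (γ.insertPt x) - Ktrans G γ) ∧
      ∫⁻ x in Λ, ENNReal.ofReal
          |expNegRelEnergy V x γ.1 * (Ktrans G (γ.insertPt x) - Ktrans G γ)| ≤
        ENNReal.ofReal (2 * L) *
          (if γ.1.Finite then ENNReal.ofReal (Real.exp (2 * B * γ.1.ncard)) else ⊤) *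
          ENNReal.ofReal ((2 + ((γ.1 ∩ Λ).ncard : ℝ)) ^ N) * volume Λ := by
  classical
  have hfinΛ : (γ.1 ∩ Λ).Finite := γ.2 Λ hΛ
  -- Ktrans is unchanged by erasing/inserting points outside Λ
  have hers : ∀ x : Rd d, x ∉ Λ → Ktrans G (γ.erasePt x) = Ktrans G γ := by
    intro x hx
    have hT' : ((γ.erasePt x).1 ∩ Λ).Finite := (γ.erasePt x).2 Λ hΛ
    rw [ktrans_eq_sum G N Λ hsupp _ hT', ktrans_eq_sum G N Λ hsupp _ hfinΛ]
    congr 1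
    congr 1
    ext y
    simp only [Set.Finite.mem_toFinset, Config.erasePt, Set.mem_inter_iff, Set.mem_diff,
      Set.mem_singleton_iff]
    constructor
    · rintro ⟨⟨h1, _⟩, h2⟩; exact ⟨h1, h2⟩
    · rintro ⟨h1, h2⟩; exact ⟨⟨h1, fun he => hx (he ▸ h2)⟩, h2⟩
  have hins : ∀ x : Rd d, x ∉ Λ → Ktrans G (γ.insertPt x) = Ktrans G γ := by
    intro x hx
    have hT' : ((γ.insertPt x).1 ∩ Λ).Finite := (γ.insertPt x).2 Λ hΛ
    rw [ktrans_eq_sum G N Λ hsupp _ hT', ktrans_eq_sum G N Λ hsupp _ hfinΛ]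
    congr 1
    congr 1
    ext y
    simp only [Set.Finite.mem_toFinset, Config.insertPt, Set.mem_inter_iff, Set.mem_insert_iff]
    constructor
    · rintro ⟨h1 | h1, h2⟩
      · exact absurd (h1 ▸ h2) hx
      · exact ⟨h1, h2⟩
    · rintro ⟨h1, h2⟩; exact ⟨Or.inr h1, h2⟩
  -- finite support of the erase-sum
  have hf0 : ∀ b : γ.1, b ∉ hfinΛ.toFinset.subtype (· ∈ γ.1) →
      Ktrans G (γ.erasePt ↑b) - Ktrans G γ = 0 := by
    intro b hb
    have hbΛ : (b : Rd d) ∉ Λ := by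
      intro hbΛ
      apply hb
      rw [Finset.mem_subtype, Set.Finite.mem_toFinset]
      exact ⟨b.2, hbΛ⟩
    rw [hers _ hbΛ, sub_self]
  have hsummable : Summable (fun x : γ.1 => Ktrans G (γ.erasePt x) - Ktrans G γ) :=
    summable_of_ne_finset_zero (fun b hb => hf0 b hb)
  refine ⟨hsummable, ?_, ?_⟩
  · -- the identity for -(HF)(γ)
    have hA : (∑' x : γ.1, (Ktrans G (γ.erasePt ↑x) - Ktrans G γ))
        = ∑ᶠ x ∈ γ.1 ∩ Λ, (Ktrans G (γ.erasePt x) - Ktrans G γ) := by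
      rw [tsum_eq_sum (f := fun x : γ.1 => Ktrans G (γ.erasePt ↑x) - Ktrans G γ)
          (s := hfinΛ.toFinset.subtype (· ∈ γ.1)) (fun b hb => hf0 b hb),
        finsum_mem_eq_finite_toFinset_sum (fun x => Ktrans G (γ.erasePt x) - Ktrans G γ) hfinΛ]
      exact Finset.sum_subtype_of_mem (fun x => Ktrans G (γ.erasePt x) - Ktrans G γ)
        (fun x hx => (hfinΛ.mem_toFinset.mp hx).1)
    have hIeq : (∫ x, expNegRelEnergy V x γ.1 * (Ktrans G (γ.insertPt x) - Ktrans G γ))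
        = ∫ x in Λ, expNegRelEnergy V x γ.1 * (Ktrans G (γ.insertPt x) - Ktrans G γ) :=
      (setIntegral_eq_integral_of_forall_compl_eq_zero (fun x hx => by
        rw [hins x hx, sub_self, mul_zero])).symm
    unfold glauber
    rw [neg_neg, hA, hIeq]
  · -- the absolute bound on the integral term
    by_cases hγfin : γ.1.Finite
    · rw [if_pos hγfin]
      set m : ℝ := ((γ.1 ∩ Λ).ncard : ℝ) with hm
      have hC0 : 0 ≤ 2 * L * Real.exp (2 * B * γ.1.ncard) * (2 + m) ^ N := by
        have hm0 : (0:ℝ) ≤ m := Nat.cast_nonneg _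
        positivity
      have hmain : ∀ x : Rd d,
          ENNReal.ofReal |expNegRelEnergy V x γ.1 * (Ktrans G (γ.insertPt x) - Ktrans G γ)|
            ≤ ENNReal.ofReal (2 * L * Real.exp (2 * B * γ.1.ncard) * (2 + m) ^ N) := by
        intro x
        by_cases hx : x ∈ γ.1
        · have hinsx : γ.insertPt x = γ := Subtype.ext (Set.insert_eq_self.mpr hx)
          rw [hinsx, sub_self, mul_zero, abs_zero, ENNReal.ofReal_zero]
          exact zero_le
        apply ENNReal.ofReal_le_ofReal
        rw [abs_mul, abs_of_nonneg (expNegRelEnergy_nonneg V x γ.1)]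
        have h1 : expNegRelEnergy V x γ.1 ≤ Real.exp (2 * B * γ.1.ncard) :=
          expNegRelEnergy_le V B hS γ.1 hγfin x hx
        have hm0 : (0:ℝ) ≤ m := Nat.cast_nonneg _
        have h2 : |Ktrans G (γ.insertPt x) - Ktrans G γ| ≤ 2 * L * (2 + m) ^ N := by
          have hTins : ((γ.insertPt x).1 ∩ Λ).Finite := (γ.insertPt x).2 Λ hΛ
          have ha := ktrans_abs_le G L N Λ hbd hsupp (γ.insertPt x) hTins
          have hb := ktrans_abs_le G L N Λ hbd hsupp γ hfinΛ
          have hm1 : (((γ.insertPt x).1 ∩ Λ).ncard : ℝ) ≤ m + 1 := by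
            have hsub : (γ.insertPt x).1 ∩ Λ ⊆ insert x (γ.1 ∩ Λ) := by
              rintro y ⟨hy, hyΛ⟩
              rcases hy with rfl | hy
              · exact Set.mem_insert _ _
              · exact Set.mem_insert_of_mem _ ⟨hy, hyΛ⟩
            have hle1 := Set.ncard_le_ncard hsub (hfinΛ.insert x)
            have hle2 := Set.ncard_insert_le x (γ.1 ∩ Λ)
            rw [hm]
            push_cast
            exact_mod_cast le_trans (Nat.cast_le.mpr hle1)
              (by exact_mod_cast Nat.cast_le.mpr hle2 : ((insert x (γ.1 ∩ Λ)).ncard : ℝ) ≤ (γ.1 ∩ Λ).ncard + 1)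
          have hp1 : (1 + (((γ.insertPt x).1 ∩ Λ).ncard : ℝ)) ^ N ≤ (2 + m) ^ N :=
            pow_le_pow_left₀ (by positivity) (by linarith) N
          have hp2 : (1 + m) ^ N ≤ (2 + m) ^ N :=
            pow_le_pow_left₀ (by positivity) (by linarith) N
          calc |Ktrans G (γ.insertPt x) - Ktrans G γ|
              ≤ |Ktrans G (γ.insertPt x)| + |Ktrans G γ| := abs_sub _ _
            _ ≤ L * (2 + m) ^ N + L * (2 + m) ^ N := by
                refine add_le_add (le_trans ha ?_) (le_trans hb ?_)
                · exact mul_le_mul_of_nonneg_left hp1 hL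
                · exact mul_le_mul_of_nonneg_left hp2 hL
            _ = 2 * L * (2 + m) ^ N := by ring
        calc expNegRelEnergy V x γ.1 * |Ktrans G (γ.insertPt x) - Ktrans G γ|
            ≤ Real.exp (2 * B * γ.1.ncard) * (2 * L * (2 + m) ^ N) :=
              mul_le_mul h1 h2 (abs_nonneg _) (Real.exp_pos _).le
          _ = 2 * L * Real.exp (2 * B * γ.1.ncard) * (2 + m) ^ N := by ring
      calc ∫⁻ x in Λ, ENNReal.ofReal
            |expNegRelEnergy V x γ.1 * (Ktrans G (γ.insertPt x) - Ktrans G γ)|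
          ≤ ∫⁻ _x in Λ, ENNReal.ofReal
              (2 * L * Real.exp (2 * B * γ.1.ncard) * (2 + m) ^ N) :=
            lintegral_mono (fun x => hmain x)
        _ = ENNReal.ofReal (2 * L * Real.exp (2 * B * γ.1.ncard) * (2 + m) ^ N)
              * volume Λ := setLIntegral_const _ _
        _ = ENNReal.ofReal (2 * L) * ENNReal.ofReal (Real.exp (2 * B * γ.1.ncard))
              * ENNReal.ofReal ((2 + m) ^ N) * volume Λ := by
            rw [← ENNReal.ofReal_mul (by positivity), ← ENNReal.ofReal_mul (by positivity)]
    · rw [if_neg hγfin]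
      by_cases hL0 : L = 0
      · have hG0 : ∀ η, G η = 0 := fun η => abs_nonpos_iff.mp (hL0 ▸ hbd η)
        have hK : ∀ δ : Config d, Ktrans G δ = 0 := fun δ => by
          unfold Ktrans; simp [hG0]
        have hz0 : ∀ x : Rd d, ENNReal.ofReal
            |expNegRelEnergy V x γ.1 * (Ktrans G (γ.insertPt x) - Ktrans G γ)| = 0 := by
          intro x; rw [hK, hK, sub_self, mul_zero, abs_zero, ENNReal.ofReal_zero]
        simp only [hz0]
        simp
      · rcases eq_or_ne (volume Λ) 0 with hv | hv
        · rw [setLIntegral_measure_zero _ _ hv]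
          exact zero_le
        · have hLpos : 0 < L := lt_of_le_of_ne hL (Ne.symm hL0)
          have h2L : ENNReal.ofReal (2 * L) ≠ 0 := by
            simp only [Ne, ENNReal.ofReal_eq_zero, not_le]
            linarith
          have hpow : ENNReal.ofReal ((2 + ((γ.1 ∩ Λ).ncard : ℝ)) ^ N) ≠ 0 := by
            have hp : (0:ℝ) < (2 + ((γ.1 ∩ Λ).ncard : ℝ)) ^ N := by positivity
            simp only [Ne, ENNReal.ofReal_eq_zero, not_le]
            linarith
          rw [ENNReal.mul_top h2L, ENNReal.top_mul hpow, ENNReal.top_mul hv]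
          exact le_top
end
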